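/- Let L be a lobster, C the caterpillar obtained by removing the leaves of L, and P the path obtained by removing the leaves of C (vertices of P are called spinal vertices). If v is a vertex of L that is either not a spinal vertex or has degree different from 2 in L, then for every k ≥ 1 there exists a leaf ℓ of L with |I^k_L(v)| ≤ |I^k_L(ℓ)|. -/

import Mathlib

open scoped Classical

variable {V : Type*}

/-- `P = p 1, p 2, …, p n` is an escape path in `G` (from `p 1` to `p n`):
a path in `G` whose last vertex `p n` has degree 1 and whose vertices
`p i` for `2 ≤ i ≤ n - 2` have degree 2. -/
def IsEscapePath [Fintype V] (G : SimpleGraph V) (n : ℕ) (p : ℕ → V) : Prop :=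
  1 ≤ n ∧ Set.InjOn p (Set.Icc 1 n) ∧
  (∀ i, 1 ≤ i → i < n → G.Adj (p i) (p (i + 1))) ∧
  G.degree (p n) = 1 ∧
  ∀ i, 2 ≤ i → i ≤ n - 2 → G.degree (p i) = 2

/-- The flip of the path `p 1, …, p n`: it maps `p i` to `p (n + 1 - i)` and
fixes every vertex outside the path. -/
noncomputable def flipP (n : ℕ) (p : ℕ → V) : V → V := fun x =>
  if h : ∃ i, 1 ≤ i ∧ i ≤ n ∧ p i = x then p (n + 1 - h.choose) else x

/-- `s` is an independent set of `G`. -/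
def IndepSet (G : SimpleGraph V) (s : Set V) : Prop :=
  ∀ x ∈ s, ∀ y ∈ s, x ≠ y → ¬ G.Adj x y

/-- The star `I^k_G(u)`: the family of independent `k`-subsets of `G`
containing the vertex `u`. -/
noncomputable def star [Fintype V] (G : SimpleGraph V) (k : ℕ) (u : V) :
    Finset (Finset V) :=
  Finset.univ.filter
    (fun A : Finset V => A.card = k ∧ u ∈ A ∧
      ∀ x ∈ A, ∀ y ∈ A, x ≠ y → ¬ G.Adj x y)

/-- A caterpillar: a finite tree (on at least two vertices) such that deleting all
leaves (vertices of degree 1) and their incident edges yields a path graph. -/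
def IsCaterpillar [Fintype V] (G : SimpleGraph V) : Prop :=
  G.IsTree ∧ 2 ≤ Fintype.card V ∧
    ∃ m : ℕ,
      Nonempty ((G.induce {v : V | G.degree v ≠ 1}) ≃g SimpleGraph.pathGraph m)

/-- `innerGraph G`: the graph obtained from `G` by removing its leaves
(the induced subgraph on the non-leaf vertices). -/
abbrev innerGraph [Fintype V] (G : SimpleGraph V) :
    SimpleGraph {v : V | G.degree v ≠ 1} :=
  G.induce {v : V | G.degree v ≠ 1}

/-- A lobster: a finite tree such that removing all leaves yields a caterpillar. -/
def IsLobster [Fintype V] (G : SimpleGraph V) : Prop :=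
  G.IsTree ∧ 2 ≤ Fintype.card V ∧ IsCaterpillar (innerGraph G)

/-- A spinal vertex of `G`: a vertex of the path obtained by removing the leaves
of `G` twice, i.e. a non-leaf of `G` that is also a non-leaf of `innerGraph G`. -/
def IsSpinal [Fintype V] (G : SimpleGraph V) (v : V) : Prop :=
  ∃ h : G.degree v ≠ 1, (innerGraph G).degree ⟨v, h⟩ ≠ 1


lemma aux_pos_degree [Fintype V] (G : SimpleGraph V) (hc : G.Connected)
    (hcard : 2 ≤ Fintype.card V) (v : V) [Fintype (G.neighborSet v)] :
    0 < G.degree v := by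
  rw [G.degree_pos_iff_exists_adj]
  obtain ⟨w, hw⟩ := Fintype.exists_ne_of_one_lt_card (by omega) v
  obtain ⟨p⟩ := hc.preconnected v w
  cases p with
  | nil => exact absurd rfl hw.symm
  | cons h _ => exact ⟨_, h⟩

lemma aux_induce_degree {α : Type*} (G : SimpleGraph α) (S : Set α) (v : α)
    (hv : v ∈ S) (h : ∀ u, G.Adj v u → u ∈ S)
    [Fintype ((G.induce S).neighborSet ⟨v, hv⟩)] [Fintype (G.neighborSet v)] :
    (G.induce S).degree ⟨v, hv⟩ = G.degree v := by
  rw [← SimpleGraph.card_neighborFinset_eq_degree,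
    ← SimpleGraph.card_neighborFinset_eq_degree]
  refine Finset.card_bij (fun a _ => (a : α)) ?_ ?_ ?_
  · intro a ha
    rw [SimpleGraph.mem_neighborFinset] at ha ⊢
    exact ha
  · intro a _ b _ hab
    exact Subtype.ext hab
  · intro b hb
    rw [SimpleGraph.mem_neighborFinset] at hb
    exact ⟨⟨b, h b hb⟩, by rwa [SimpleGraph.mem_neighborFinset], rfl⟩

lemma aux_path_degree_le (m : ℕ) (x : Fin m)
    [Fintype ((SimpleGraph.pathGraph m).neighborSet x)] :
    (SimpleGraph.pathGraph m).degree x ≤ 2 := by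
  rw [← SimpleGraph.card_neighborFinset_eq_degree]
  have h : ((SimpleGraph.pathGraph m).neighborFinset x).card ≤
      ({x.val + 1, x.val - 1} : Finset ℕ).card := by
    apply Finset.card_le_card_of_injOn (fun y => y.val)
    · intro y hy
      rw [Finset.mem_coe, SimpleGraph.mem_neighborFinset, SimpleGraph.pathGraph_adj] at hy
      rcases hy with h | h
      · simp [← h]
      · simp [← h]
    · intro a _ b _ hab
      exact Fin.ext hab
  calc _ ≤ _ := h
    _ ≤ 2 := (Finset.card_insert_le _ _).trans (by simp)

lemma aux_iso_degree {α β : Type*} {G : SimpleGraph α} {H : SimpleGraph β}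
    (f : G ≃g H) (v : α) [Fintype (H.neighborSet (f v))] [Fintype (G.neighborSet v)] :
    H.degree (f v) = G.degree v := by
  rw [← SimpleGraph.card_neighborSet_eq_degree, ← SimpleGraph.card_neighborSet_eq_degree]
  exact (Fintype.card_congr (f.mapNeighborSet v)).symm

lemma aux_star_le [Fintype V] (G : SimpleGraph V) (v ℓ u : V)
    (hℓ : ∀ x, G.Adj ℓ x → x = u) (hu : u = v ∨ G.Adj v u) (hvl : v ≠ ℓ) (k : ℕ) :
    (star G k v).card ≤ (star G k ℓ).card := by
  classical
  apply Finset.card_le_card_of_injOn (fun A => if ℓ ∈ A then A else insert ℓ (A.erase v))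
  · intro A hA
    simp only [_root_.star, Finset.mem_coe, Finset.mem_filter, Finset.mem_univ, true_and] at hA ⊢
    obtain ⟨hcard, hvA, hind⟩ := hA
    by_cases hlA : ℓ ∈ A
    · simp only [if_pos hlA]
      exact ⟨hcard, hlA, hind⟩
    · simp only [if_neg hlA]
      have hlerase : ℓ ∉ A.erase v := fun h => hlA (Finset.mem_of_mem_erase h)
      refine ⟨?_, Finset.mem_insert_self _ _, ?_⟩
      · rw [Finset.card_insert_of_notMem hlerase, Finset.card_erase_of_mem hvA, hcard]
        have : 1 ≤ k := by
          rw [← hcard]; exact Finset.card_pos.mpr ⟨v, hvA⟩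
        omega
      · intro x hx y hy hxy
        rcases Finset.mem_insert.mp hx with rfl | hx'
        · rcases Finset.mem_insert.mp hy with rfl | hy'
          · exact absurd rfl hxy
          · intro hadj
            have := hℓ y hadj
            subst this
            rcases hu with rfl | huv
            · exact (Finset.ne_of_mem_erase hy') rfl
            · exact hind v hvA y (Finset.mem_of_mem_erase hy')
                (fun h => (Finset.ne_of_mem_erase hy') h.symm) huv
        · rcases Finset.mem_insert.mp hy with rfl | hy'
          · intro hadj
            have := hℓ x hadj.symm
            subst this
            rcases hu with rfl | huv
            · exact (Finset.ne_of_mem_erase hx') rfl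
            · exact hind v hvA x (Finset.mem_of_mem_erase hx')
                (fun h => (Finset.ne_of_mem_erase hx') h.symm) huv
          · exact hind x (Finset.mem_of_mem_erase hx') y (Finset.mem_of_mem_erase hy') hxy
  · intro A hA B hB hAB
    simp only [_root_.star, Finset.mem_coe, Finset.mem_filter, Finset.mem_univ, true_and] at hA hB
    obtain ⟨-, hvA, -⟩ := hA
    obtain ⟨-, hvB, -⟩ := hB
    by_cases hlA : ℓ ∈ A <;> by_cases hlB : ℓ ∈ B <;>
      simp only [if_pos, if_neg, hlA, hlB, if_true, if_false] at hAB
    · exact hAB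
    · exfalso
      have : v ∉ insert ℓ (B.erase v) := by
        simp [hvl, Finset.notMem_erase]
      rw [← hAB] at this
      exact this hvA
    · exfalso
      have : v ∉ insert ℓ (A.erase v) := by
        simp [hvl, Finset.notMem_erase]
      rw [hAB] at this
      exact this hvB
    · have h1 : A.erase v = B.erase v := by
        have hlA' : ℓ ∉ A.erase v := fun h => hlA (Finset.mem_of_mem_erase h)
        have hlB' : ℓ ∉ B.erase v := fun h => hlB (Finset.mem_of_mem_erase h)
        have := congrArg (fun s => Finset.erase s ℓ) hAB
        simpa [Finset.erase_insert hlA', Finset.erase_insert hlB'] using this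
      rw [← Finset.insert_erase hvA, ← Finset.insert_erase hvB, h1]

/-- in a lobster `L`, if `v` is not a spinal vertex or has degree
different from 2, then for every `k ≥ 1` there is a leaf `ℓ` with
`|I^k_L(v)| ≤ |I^k_L(ℓ)|`. -/
theorem lobster_star_le_leaf_star [Fintype V] (G : SimpleGraph V)
    (hG : IsLobster G) (v : V) (hv : ¬ IsSpinal G v ∨ G.degree v ≠ 2)
    (k : ℕ) (hk : 1 ≤ k) :
    ∃ ℓ : V, G.degree ℓ = 1 ∧ (star G k v).card ≤ (star G k ℓ).card := by
  classical
  obtain ⟨htree, hcard, hcat⟩ := hG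
  have hpos : ∀ w : V, 0 < G.degree w := fun w =>
    aux_pos_degree G htree.isConnected hcard w
  have huniq : ∀ ℓ u : V, G.degree ℓ = 1 → G.Adj ℓ u → ∀ x, G.Adj ℓ x → x = u := by
    intro ℓ u hdeg hadj x hx
    have hle : (G.neighborFinset ℓ).card ≤ 1 := by
      rw [SimpleGraph.card_neighborFinset_eq_degree, hdeg]
    exact Finset.card_le_one.mp hle x (by rwa [SimpleGraph.mem_neighborFinset]) u
      (by rwa [SimpleGraph.mem_neighborFinset])
  by_cases h1 : G.degree v = 1
  · exact ⟨v, h1, le_rfl⟩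
  by_cases h2 : ∃ u, G.Adj v u ∧ G.degree u = 1
  · obtain ⟨ℓ, hadj, hdeg⟩ := h2
    exact ⟨ℓ, hdeg, aux_star_le G v ℓ v (huniq ℓ v hdeg hadj.symm) (Or.inl rfl)
      (G.ne_of_adj hadj) k⟩
  by_cases h3 : ∃ u ℓ, G.Adj v u ∧ G.Adj u ℓ ∧ G.degree ℓ = 1
  · obtain ⟨u, ℓ, hvu, hul, hdeg⟩ := h3
    have hvl : v ≠ ℓ := fun h => h1 (h ▸ hdeg)
    exact ⟨ℓ, hdeg, aux_star_le G v ℓ u (huniq ℓ u hdeg hul.symm) (Or.inr hvu) hvl k⟩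
  exfalso
  push_neg at h2 h3
  have hS : ∀ u, G.Adj v u → u ∈ {w : V | G.degree w ≠ 1} := h2
  have hdv2 : 2 ≤ G.degree v := by have := hpos v; omega
  have hspinal : IsSpinal G v := by
    refine ⟨h1, ?_⟩
    rw [aux_induce_degree G _ v h1 hS]
    omega
  have hdv : G.degree v ≠ 2 := hv.resolve_left (not_not.mpr hspinal)
  have hdv3 : 3 ≤ G.degree v := by omega
  obtain ⟨-, -, m, ⟨f⟩⟩ := hcat
  have hx : ((innerGraph G).degree ⟨v, h1⟩ ≠ 1) := by
    rw [aux_induce_degree G _ v h1 hS]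
    omega
  have hle := aux_path_degree_le m (f ⟨⟨v, h1⟩, hx⟩)
  rw [aux_iso_degree f] at hle
  erw [aux_induce_degree (innerGraph G) {w | (innerGraph G).degree w ≠ 1} ⟨v, h1⟩ hx] at hle
  · rw [aux_induce_degree G _ v h1 hS] at hle
    omega
  · intro u hu
    have hGadj : G.Adj v u.val := hu
    show (innerGraph G).degree u ≠ 1
    rw [aux_induce_degree G _ u.val u.2 (fun w hw => h3 u.val w hGadj hw)]
    exact u.2
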